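/- Let G be a locally compact commutative group with a measure-preserving ergodic action T on a probability space (X, μ), and let ν_j be Borel probability measures on G. If for some n ≥ 1 the convolution powers ν_j^{*n} form a universal sequence (i.e., the averages with weights ν_j^{*n} of every f ∈ L¹(μ) converge in L¹ to ∫ f dμ), then the sequence ν_j is also universal. -/

import Mathlib

set_option linter.unusedSectionVars false
set_option linter.unusedVariables false

open MeasureTheory Filter Topology Function

noncomputable def conv {G : Type} [AddCommGroup G] [MeasurableSpace G]
    (ν ν' : Measure G) : Measure G :=
  Measure.map (fun p : G × G => p.1 + p.2) (ν.prod ν')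

noncomputable def convPow {G : Type} [AddCommGroup G] [MeasurableSpace G]
    (ν : Measure G) : ℕ → Measure G
  | 0 => Measure.dirac 0
  | n + 1 => conv ν (convPow ν n)

section Helpers

variable {α : Type} [MeasurableSpace α] {m : Measure α}

lemma int_of_bdd [IsFiniteMeasure m] {F : α → ℝ} (hF : AEStronglyMeasurable F m) {C : ℝ}
    (hC : ∀ p, |F p| ≤ C) : Integrable F m :=
  Integrable.mono' (integrable_const C) hF (ae_of_all _ fun p => by
    simpa [Real.norm_eq_abs] using hC p)

/-- Cauchy–Schwarz for integrals. -/
lemma cs_integral {u w : α → ℝ} (hu2 : Integrable (fun x => u x * u x) m)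
    (hw2 : Integrable (fun x => w x * w x) m)
    (huw : Integrable (fun x => u x * w x) m) :
    (∫ x, u x * w x ∂m) ^ 2 ≤ (∫ x, u x * u x ∂m) * ∫ x, w x * w x ∂m := by
  set A := ∫ x, u x * u x ∂m
  set B := ∫ x, w x * w x ∂m
  set J := ∫ x, u x * w x ∂m
  have key : ∀ t : ℝ, 0 ≤ A * (t * t) + (2 * J) * t + B := by
    intro t
    have h0 : 0 ≤ ∫ x, (t * u x + w x) * (t * u x + w x) ∂m :=
      integral_nonneg fun x => mul_self_nonneg _
    have hexp : ∀ x, (t * u x + w x) * (t * u x + w x)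
        = (t * t) * (u x * u x) + (2 * t) * (u x * w x) + w x * w x := by
      intro x; ring
    rw [integral_congr_ae (ae_of_all _ hexp)] at h0
    have hi1 : Integrable (fun x => t * t * (u x * u x)) m := hu2.const_mul _
    have hi2 : Integrable (fun x => 2 * t * (u x * w x)) m := huw.const_mul _
    have hi12 : Integrable (fun x => t * t * (u x * u x) + 2 * t * (u x * w x)) m :=
      hi1.add hi2
    rw [integral_add hi12 hw2, integral_add hi1 hi2, integral_const_mul,
      integral_const_mul] at h0
    calc (0:ℝ) ≤ t * t * A + 2 * t * J + B := h0
    _ = A * (t * t) + (2 * J) * t + B := by ring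
  have hd := discrim_le_zero key
  rw [discrim] at hd
  nlinarith [hd]

end Helpers

section Core

variable {G : Type} [MeasurableSpace G] [AddCommGroup G]
variable {X : Type} [MeasurableSpace X]

/-- The averaging operator. -/
noncomputable def avgT (T : G → X → X) (ν : Measure G) (f : X → ℝ) (x : X) : ℝ :=
  ∫ g, f (T g x) ∂ν

variable {T : G → X → X} {μ : Measure X}

lemma measT1 (hT : Measurable fun p : G × X => T p.1 p.2) (g : G) : Measurable (T g) :=
  hT.comp (measurable_const.prodMk measurable_id)

lemma measT2 (hT : Measurable fun p : G × X => T p.1 p.2) (x : X) :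
    Measurable (fun g => T g x) :=
  hT.comp (measurable_id.prodMk measurable_const)

lemma avg_meas (hT : Measurable fun p : G × X => T p.1 p.2) {ν : Measure G} [SFinite ν]
    {f : X → ℝ} (hf : Measurable f) : Measurable (avgT T ν f) := by
  have : Measurable fun p : X × G => f (T p.2 p.1) :=
    hf.comp (hT.comp (measurable_snd.prodMk measurable_fst))
  exact (StronglyMeasurable.integral_prod_right'
    (f := fun p : X × G => f (T p.2 p.1)) this.stronglyMeasurable).measurable

lemma int_comp (hT : Measurable fun p : G × X => T p.1 p.2) {ν : Measure G}
    [IsFiniteMeasure ν] {f : X → ℝ} {C : ℝ} (hf : Measurable f) (hC : ∀ x, |f x| ≤ C)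
    (x : X) : Integrable (fun g => f (T g x)) ν :=
  int_of_bdd ((hf.comp (measT2 hT x)).aestronglyMeasurable) (fun g => hC _)

lemma avg_bdd {ν : Measure G} [IsProbabilityMeasure ν] {f : X → ℝ} {C : ℝ}
    (hC : ∀ x, |f x| ≤ C) (x : X) : |avgT T ν f x| ≤ C := by
  have h1 : |avgT T ν f x| ≤ ∫ g, |f (T g x)| ∂ν := by
    simpa [avgT, Real.norm_eq_abs] using
      norm_integral_le_integral_norm (f := fun g => f (T g x)) (μ := ν)
  refine h1.trans ?_
  calc ∫ g, |f (T g x)| ∂ν ≤ ∫ _g, C ∂ν := by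
        refine integral_mono_of_nonneg (ae_of_all _ fun g => abs_nonneg _)
          (integrable_const C) (ae_of_all _ fun g => hC _)
  _ = C := by simp

end Core

section Core2

variable {G : Type} [MeasurableSpace G] [AddCommGroup G]
variable {X : Type} [MeasurableSpace X]
variable {T : G → X → X} {μ : Measure X}

/-- The product map `(g, x) ↦ T g x` is measure preserving. -/
lemma MP_pi (hT : Measurable fun p : G × X => T p.1 p.2)
    (hMP : ∀ g, MeasurePreserving (T g) μ μ) (ν : Measure G) [IsProbabilityMeasure ν]
    [SigmaFinite μ] :
    MeasurePreserving (fun p : G × X => T p.1 p.2) (ν.prod μ) μ := by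
  refine ⟨hT, ?_⟩
  ext s hs
  rw [Measure.map_apply hT hs, Measure.prod_apply (hT hs)]
  have : ∀ g : G, μ (Prod.mk g ⁻¹' ((fun p : G × X => T p.1 p.2) ⁻¹' s)) = μ s := by
    intro g
    have : (Prod.mk g ⁻¹' ((fun p : G × X => T p.1 p.2) ⁻¹' s)) = T g ⁻¹' s := rfl
    rw [this, (hMP g).measure_preimage hs.nullMeasurableSet]
  simp [this]

lemma MP_integral_comp {α β : Type} [MeasurableSpace α] [MeasurableSpace β]
    {π : α → β} {ma : Measure α} {mb : Measure β} (hπ : MeasurePreserving π ma mb)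
    {f : β → ℝ} (hf : AEStronglyMeasurable f mb) :
    ∫ a, f (π a) ∂ma = ∫ b, f b ∂mb := by
  rw [← hπ.map_eq] at hf ⊢
  exact (integral_map hπ.measurable.aemeasurable hf).symm

/-- `∫ f(T_g x) dμ(x) = ∫ f dμ`. -/
lemma int_T (hMP : ∀ g, MeasurePreserving (T g) μ μ) {f : X → ℝ}
    (hf : AEStronglyMeasurable f μ) (g : G) :
    ∫ x, f (T g x) ∂μ = ∫ x, f x ∂μ :=
  MP_integral_comp (hMP g) hf

variable [IsProbabilityMeasure μ]

lemma int_prod_comp (hT : Measurable fun p : G × X => T p.1 p.2)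
    (hMP : ∀ g, MeasurePreserving (T g) μ μ) (ν : Measure G) [IsProbabilityMeasure ν]
    {f : X → ℝ} (hf : Integrable f μ) :
    Integrable (fun p : G × X => f (T p.1 p.2)) (ν.prod μ) := by
  have := ((MP_pi hT hMP ν).integrable_comp hf.aestronglyMeasurable).mpr hf
  exact this

lemma int_prod_comp_swap (hT : Measurable fun p : G × X => T p.1 p.2)
    (hMP : ∀ g, MeasurePreserving (T g) μ μ) (ν : Measure G) [IsProbabilityMeasure ν]
    {f : X → ℝ} (hf : Integrable f μ) :
    Integrable (fun p : X × G => f (T p.2 p.1)) (μ.prod ν) := by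
  have h1 := int_prod_comp hT hMP ν hf
  exact h1.swap

lemma avg_aesm (hT : Measurable fun p : G × X => T p.1 p.2)
    (hMP : ∀ g, MeasurePreserving (T g) μ μ) (ν : Measure G) [IsProbabilityMeasure ν]
    {f : X → ℝ} (hf : Integrable f μ) : AEStronglyMeasurable (avgT T ν f) μ :=
  (int_prod_comp_swap hT hMP ν hf).aestronglyMeasurable.integral_prod_right'

lemma avg_integrable (hT : Measurable fun p : G × X => T p.1 p.2)
    (hMP : ∀ g, MeasurePreserving (T g) μ μ) (ν : Measure G) [IsProbabilityMeasure ν]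
    {f : X → ℝ} (hf : Integrable f μ) : Integrable (avgT T ν f) μ := by
  have hsw := int_prod_comp_swap hT hMP ν hf
  refine Integrable.mono' hsw.integral_norm_prod_left (avg_aesm hT hMP ν hf)
    (ae_of_all _ fun x => ?_)
  simpa [avgT, Real.norm_eq_abs] using
    norm_integral_le_integral_norm (f := fun g => f (T g x)) (μ := ν)

/-- `L¹` contraction for integrable functions. -/
lemma avg_abs_le (hT : Measurable fun p : G × X => T p.1 p.2)
    (hMP : ∀ g, MeasurePreserving (T g) μ μ) (ν : Measure G) [IsProbabilityMeasure ν]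
    {f : X → ℝ} (hf : Integrable f μ) :
    ∫ x, |avgT T ν f x| ∂μ ≤ ∫ x, |f x| ∂μ := by
  have hsw := int_prod_comp_swap hT hMP ν hf
  have step1 : ∫ x, |avgT T ν f x| ∂μ ≤ ∫ x, ∫ g, |f (T g x)| ∂ν ∂μ := by
    refine integral_mono_of_nonneg (ae_of_all _ fun x => abs_nonneg _)
      (by simpa [Real.norm_eq_abs] using hsw.integral_norm_prod_left)
      (ae_of_all _ fun x => ?_)
    simpa [avgT, Real.norm_eq_abs] using
      norm_integral_le_integral_norm (f := fun g => f (T g x)) (μ := ν)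
  refine step1.trans_eq ?_
  have habs : Integrable (fun p : X × G => |f (T p.2 p.1)|) (μ.prod ν) := by
    simpa [Real.norm_eq_abs] using hsw.norm
  rw [MeasureTheory.integral_integral habs]
  have habs2 : Integrable (fun p : G × X => |f (T p.1 p.2)|) (ν.prod μ) := by
    simpa [Real.norm_eq_abs] using (int_prod_comp hT hMP ν hf).norm
  rw [show ∫ p : X × G, |f (T p.2 p.1)| ∂μ.prod ν
      = ∫ p : G × X, |f (T p.1 p.2)| ∂ν.prod μ from
    MP_integral_comp Measure.measurePreserving_swap habs2.aestronglyMeasurable]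
  exact MP_integral_comp (MP_pi hT hMP ν) (f := fun y => |f y|)
    (by simpa [Real.norm_eq_abs] using hf.norm.aestronglyMeasurable)

end Core2

section Core3

variable {G : Type} [MeasurableSpace G] [AddCommGroup G]
variable {X : Type} [MeasurableSpace X]
variable {T : G → X → X} {μ : Measure X} [IsProbabilityMeasure μ]

lemma avg_congr_ae (hT : Measurable fun p : G × X => T p.1 p.2)
    (hMP : ∀ g, MeasurePreserving (T g) μ μ) (ν : Measure G) [IsProbabilityMeasure ν]
    {f f' : X → ℝ} (hae : f =ᵐ[μ] f') : avgT T ν f =ᵐ[μ] avgT T ν f' := by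
  have h1 : ∀ᵐ p ∂(ν.prod μ), f (T p.1 p.2) = f' (T p.1 p.2) :=
    (MP_pi hT hMP ν).quasiMeasurePreserving.ae hae
  have h2 : ∀ᵐ p ∂(μ.prod ν), f (T p.2 p.1) = f' (T p.2 p.1) :=
    Measure.measurePreserving_swap.quasiMeasurePreserving.ae h1
  filter_upwards [Measure.ae_ae_of_ae_prod h2] with x hx
  exact integral_congr_ae hx

lemma avg_add_ae (hT : Measurable fun p : G × X => T p.1 p.2)
    (hMP : ∀ g, MeasurePreserving (T g) μ μ) (ν : Measure G) [IsProbabilityMeasure ν]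
    {f f' : X → ℝ} (hf : Integrable f μ) (hf' : Integrable f' μ) :
    avgT T ν (fun y => f y + f' y) =ᵐ[μ] fun x => avgT T ν f x + avgT T ν f' x := by
  have h1 : ∀ᵐ x ∂μ, Integrable (fun g => f (T g x)) ν :=
    (int_prod_comp_swap hT hMP ν hf).prod_right_ae
  have h2 : ∀ᵐ x ∂μ, Integrable (fun g => f' (T g x)) ν :=
    (int_prod_comp_swap hT hMP ν hf').prod_right_ae
  filter_upwards [h1, h2] with x hx1 hx2
  exact integral_add hx1 hx2

/-- Mean is preserved: `∫ avg f dμ = ∫ f dμ` (integrable version). -/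
lemma avg_integral (hT : Measurable fun p : G × X => T p.1 p.2)
    (hMP : ∀ g, MeasurePreserving (T g) μ μ) (ν : Measure G) [IsProbabilityMeasure ν]
    {f : X → ℝ} (hf : Integrable f μ) :
    ∫ x, avgT T ν f x ∂μ = ∫ x, f x ∂μ := by
  have hsw := int_prod_comp_swap hT hMP ν hf
  rw [show ∫ x, avgT T ν f x ∂μ = ∫ x, ∫ g, f (T g x) ∂ν ∂μ from rfl,
    MeasureTheory.integral_integral hsw]
  rw [show ∫ p : X × G, f (T p.2 p.1) ∂μ.prod ν
      = ∫ p : G × X, f (T p.1 p.2) ∂ν.prod μ from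
    MP_integral_comp Measure.measurePreserving_swap
      (int_prod_comp hT hMP ν hf).aestronglyMeasurable]
  exact MP_integral_comp (MP_pi hT hMP ν) hf.aestronglyMeasurable

/-- `avgT` of a convolution is a composition of `avgT`s. -/
lemma avg_conv (hT : Measurable fun p : G × X => T p.1 p.2)
    (hTadd : ∀ g h : G, T (g + h) = T g ∘ T h)
    {ν m : Measure G} [IsProbabilityMeasure ν] [IsProbabilityMeasure m]
    (hA : AEMeasurable (fun p : G × G => p.1 + p.2) (ν.prod m))
    {f : X → ℝ} {C : ℝ} (hf : Measurable f) (hC : ∀ x, |f x| ≤ C) :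
    avgT T (conv ν m) f = avgT T ν (avgT T m f) := by
  funext x
  have hfm : Measurable fun u : G => f (T u x) := hf.comp (measT2 hT x)
  have e1 : avgT T (conv ν m) f x = ∫ p : G × G, f (T (p.1 + p.2) x) ∂ν.prod m := by
    exact integral_map hA hfm.aestronglyMeasurable
  have e2 : ∀ p : G × G, f (T (p.1 + p.2) x) = f (T p.2 (T p.1 x)) := by
    intro p; rw [add_comm, hTadd]; rfl
  have hmeas : Measurable fun p : G × G => f (T p.2 (T p.1 x)) :=
    hf.comp (hT.comp (measurable_snd.prodMk ((measT2 hT x).comp measurable_fst)))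
  have hint : Integrable (fun p : G × G => f (T p.2 (T p.1 x))) (ν.prod m) :=
    int_of_bdd hmeas.aestronglyMeasurable (fun p => hC _)
  rw [e1]
  simp_rw [e2]
  rw [MeasureTheory.integral_prod _ hint]
  rfl

/-- two averaging operators commute. -/
lemma avg_comm (hT : Measurable fun p : G × X => T p.1 p.2)
    (hTadd : ∀ g h : G, T (g + h) = T g ∘ T h)
    {κ₁ κ₂ : Measure G} [IsProbabilityMeasure κ₁] [IsProbabilityMeasure κ₂]
    {f : X → ℝ} {C : ℝ} (hf : Measurable f) (hC : ∀ x, |f x| ≤ C) :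
    avgT T κ₁ (avgT T κ₂ f) = avgT T κ₂ (avgT T κ₁ f) := by
  funext x
  have hTc : ∀ (a b : G) (y : X), T b (T a y) = T a (T b y) := by
    intro a b y
    have h1 : T b (T a y) = T (b + a) y := by rw [hTadd]; rfl
    have h2 : T a (T b y) = T (a + b) y := by rw [hTadd]; rfl
    rw [h1, h2, add_comm]
  have hmeas : Measurable fun p : G × G => f (T p.1 (T p.2 x)) :=
    hf.comp (hT.comp (measurable_fst.prodMk ((measT2 hT x).comp measurable_snd)))
  have hint : Integrable (fun p : G × G => f (T p.1 (T p.2 x))) (κ₁.prod κ₂) :=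
    int_of_bdd hmeas.aestronglyMeasurable (fun p => hC _)
  have e1 : avgT T κ₁ (avgT T κ₂ f) x = ∫ a, ∫ b, f (T a (T b x)) ∂κ₂ ∂κ₁ := by
    unfold avgT
    congr 1; funext a
    congr 1; funext b
    rw [hTc]
  have e2 : avgT T κ₂ (avgT T κ₁ f) x = ∫ b, ∫ a, f (T a (T b x)) ∂κ₁ ∂κ₂ := rfl
  rw [e1, e2]
  exact MeasureTheory.integral_integral_swap hint

end Core3

section Core4

variable {G : Type} [MeasurableSpace G] [AddCommGroup G]
variable {X : Type} [MeasurableSpace X]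
variable {T : G → X → X} {μ : Measure X} [IsProbabilityMeasure μ]

/-- Adjointness: `⟨P_ν u, w⟩ = ⟨u, P_ν̌ w⟩`. -/
lemma avg_adjoint (hT : Measurable fun p : G × X => T p.1 p.2)
    (hMP : ∀ g, MeasurePreserving (T g) μ μ) (hT0 : T 0 = id)
    (hTadd : ∀ g h : G, T (g + h) = T g ∘ T h)
    (hneg : Measurable (fun g : G => -g))
    (ν : Measure G) [IsProbabilityMeasure ν]
    {u w : X → ℝ} {C C' : ℝ} (hu : Measurable u) (hCu : ∀ x, |u x| ≤ C)
    (hw : Measurable w) (hCw : ∀ x, |w x| ≤ C') :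
    ∫ x, avgT T ν u x * w x ∂μ
      = ∫ x, u x * avgT T (Measure.map (fun g : G => -g) ν) w x ∂μ := by
  have B1 : ∀ x, |u x| ≤ |C| := fun x => (hCu x).trans (le_abs_self C)
  have B2 : ∀ x, |w x| ≤ |C'| := fun x => (hCw x).trans (le_abs_self C')
  have hTgTneg : ∀ (g : G) (x : X), T g (T (-g) x) = x := by
    intro g x
    have h1 : T g (T (-g) x) = T (g + -g) x := by rw [hTadd]; rfl
    rw [h1, add_neg_cancel, hT0]; rfl
  have m1 : Measurable fun p : X × G => u (T p.2 p.1) * w p.1 :=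
    ((hu.comp (hT.comp (measurable_snd.prodMk measurable_fst))).mul
      (hw.comp measurable_fst))
  have m2 : Measurable fun p : G × X => u p.2 * w (T (-p.1) p.2) :=
    (hu.comp measurable_snd).mul
      (hw.comp (hT.comp ((hneg.comp measurable_fst).prodMk measurable_snd)))
  have hint1 : Integrable (fun p : X × G => u (T p.2 p.1) * w p.1) (μ.prod ν) :=
    int_of_bdd m1.aestronglyMeasurable (C := |C| * |C'|) (fun p => by
      rw [abs_mul]; exact mul_le_mul (B1 _) (B2 _) (abs_nonneg _) (abs_nonneg _))
  have hint2 : Integrable (fun p : G × X => u p.2 * w (T (-p.1) p.2)) (ν.prod μ) :=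
    int_of_bdd m2.aestronglyMeasurable (C := |C| * |C'|) (fun p => by
      rw [abs_mul]; exact mul_le_mul (B1 _) (B2 _) (abs_nonneg _) (abs_nonneg _))
  calc ∫ x, avgT T ν u x * w x ∂μ
      = ∫ x, ∫ g, u (T g x) * w x ∂ν ∂μ := by
        refine integral_congr_ae (ae_of_all _ fun x => ?_)
        exact (integral_mul_const (w x) (fun g => u (T g x))).symm
    _ = ∫ g, ∫ x, u (T g x) * w x ∂μ ∂ν :=
        integral_integral_swap hint1
    _ = ∫ g, ∫ x, u x * w (T (-g) x) ∂μ ∂ν := by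
        refine integral_congr_ae (ae_of_all _ fun g => ?_)
        have hm : Measurable fun y : X => u (T g y) * w y :=
          (hu.comp (measT1 hT g)).mul hw
        have := MP_integral_comp (hMP (-g)) (f := fun y => u (T g y) * w y)
          hm.aestronglyMeasurable
        simp_rw [hTgTneg] at this
        exact this.symm
    _ = ∫ x, ∫ g, u x * w (T (-g) x) ∂ν ∂μ :=
        integral_integral_swap hint2
    _ = ∫ x, u x * avgT T (Measure.map (fun g : G => -g) ν) w x ∂μ := by
        refine integral_congr_ae (ae_of_all _ fun x => ?_)
        show ∫ g, u x * w (T (-g) x) ∂ν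
          = u x * avgT T (Measure.map (fun g : G => -g) ν) w x
        rw [integral_const_mul]
        congr 1
        exact (integral_map hneg.aemeasurable
          ((hw.comp (measT2 hT x)).aestronglyMeasurable)).symm

/-- `L²` contraction for bounded measurable functions. -/
lemma avg_sq_le (hT : Measurable fun p : G × X => T p.1 p.2)
    (hMP : ∀ g, MeasurePreserving (T g) μ μ)
    (ν : Measure G) [IsProbabilityMeasure ν]
    {f : X → ℝ} {C : ℝ} (hf : Measurable f) (hC : ∀ x, |f x| ≤ C) :
    ∫ x, avgT T ν f x * avgT T ν f x ∂μ ≤ ∫ x, f x * f x ∂μ := by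
  have hCC : ∀ x, |f x * f x| ≤ |C| * |C| := fun x => by
    rw [abs_mul]
    exact mul_le_mul ((hC x).trans (le_abs_self C)) ((hC x).trans (le_abs_self C))
      (abs_nonneg _) (abs_nonneg _)
  have hsq_meas : Measurable fun y => f y * f y := hf.mul hf
  have h1 : ∀ x, avgT T ν f x * avgT T ν f x ≤ avgT T ν (fun y => f y * f y) x := by
    intro x
    have hu : Integrable (fun g => f (T g x) * f (T g x)) ν :=
      int_of_bdd ((hsq_meas.comp (measT2 hT x)).aestronglyMeasurable) (fun g => hCC _)
    have huw : Integrable (fun g => f (T g x) * (1:ℝ)) ν := by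
      simpa using int_comp hT hf hC x
    have h1i : Integrable (fun _g : G => (1:ℝ) * 1) ν := by simp
    have hcs := cs_integral (m := ν) (u := fun g => f (T g x)) (w := fun _ => 1)
      hu h1i huw
    simp only [mul_one, measure_univ, integral_const, ENNReal.toReal_one, probReal_univ, one_smul] at hcs
    calc avgT T ν f x * avgT T ν f x = (∫ g, f (T g x) ∂ν) ^ 2 := by rw [sq]; rfl
      _ ≤ ∫ g, f (T g x) * f (T g x) ∂ν := by simpa using hcs
      _ = avgT T ν (fun y => f y * f y) x := rfl
  have hil : Integrable (fun x => avgT T ν f x * avgT T ν f x) μ :=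
    int_of_bdd ((avg_meas hT hf).mul (avg_meas hT hf)).aestronglyMeasurable
      (C := |C| * |C|) (fun x => by
        rw [abs_mul]
        exact mul_le_mul ((avg_bdd hC x).trans (le_abs_self C))
          ((avg_bdd hC x).trans (le_abs_self C)) (abs_nonneg _) (abs_nonneg _))
  have hir : Integrable (avgT T ν (fun y => f y * f y)) μ :=
    int_of_bdd (avg_meas hT hsq_meas).aestronglyMeasurable
      (C := |C| * |C|) (fun x => avg_bdd hCC x)
  calc ∫ x, avgT T ν f x * avgT T ν f x ∂μ
      ≤ ∫ x, avgT T ν (fun y => f y * f y) x ∂μ := integral_mono hil hir h1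
    _ = ∫ x, f x * f x ∂μ :=
        avg_integral hT hMP ν (int_of_bdd hsq_meas.aestronglyMeasurable hCC)

end Core4

section Core5

variable {G : Type} [MeasurableSpace G] [AddCommGroup G]
variable {X : Type} [MeasurableSpace X]
variable {T : G → X → X} {μ : Measure X} [IsProbabilityMeasure μ]

lemma rev_rev {ν : Measure G} (hneg : Measurable (fun g : G => -g)) :
    Measure.map (fun g : G => -g) (Measure.map (fun g : G => -g) ν) = ν := by
  rw [Measure.map_map hneg hneg]
  have : ((fun g : G => -g) ∘ fun g : G => -g) = id := by funext g; simp
  rw [this, Measure.map_id]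

lemma iter_meas (hT : Measurable fun p : G × X => T p.1 p.2) {κ : Measure G}
    [IsProbabilityMeasure κ] {f : X → ℝ} (hf : Measurable f) :
    ∀ q, Measurable ((avgT T κ)^[q] f)
  | 0 => hf
  | (q+1) => by
      rw [Function.iterate_succ_apply']
      exact avg_meas hT (iter_meas hT hf q)

lemma iter_bdd (hT : Measurable fun p : G × X => T p.1 p.2) {κ : Measure G}
    [IsProbabilityMeasure κ] {f : X → ℝ} {C : ℝ} (hC : ∀ x, |f x| ≤ C) :
    ∀ q, ∀ x, |(avgT T κ)^[q] f x| ≤ C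
  | 0 => hC
  | (q+1) => by
      rw [Function.iterate_succ_apply']
      exact avg_bdd (iter_bdd hT hC q)

lemma comm_iter (hT : Measurable fun p : G × X => T p.1 p.2)
    (hTadd : ∀ g h : G, T (g + h) = T g ∘ T h)
    {κ₁ κ₂ : Measure G} [IsProbabilityMeasure κ₁] [IsProbabilityMeasure κ₂] :
    ∀ (q : ℕ) {C : ℝ} {f : X → ℝ}, Measurable f → (∀ x, |f x| ≤ C) →
      avgT T κ₂ ((avgT T κ₁)^[q] f) = (avgT T κ₁)^[q] (avgT T κ₂ f)
  | 0, _, _, _, _ => rfl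
  | (q+1), C, f, hf, hC => by
      rw [Function.iterate_succ_apply, Function.iterate_succ_apply,
        comm_iter hT hTadd q (C := C) (avg_meas hT hf) (avg_bdd hC),
        avg_comm hT hTadd hf hC]

lemma B_iter (hT : Measurable fun p : G × X => T p.1 p.2)
    (hTadd : ∀ g h : G, T (g + h) = T g ∘ T h)
    (hneg : Measurable (fun g : G => -g)) {ν : Measure G} [IsProbabilityMeasure ν] :
    ∀ (q : ℕ) {C : ℝ} {f : X → ℝ}, Measurable f → (∀ x, |f x| ≤ C) →
      (fun v => avgT T (Measure.map (fun g : G => -g) ν) (avgT T ν v))^[q] f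
        = (avgT T (Measure.map (fun g : G => -g) ν))^[q] ((avgT T ν)^[q] f)
  | 0, _, _, _, _ => rfl
  | (q+1), C, f, hf, hC => by
      haveI : IsProbabilityMeasure (Measure.map (fun g : G => -g) ν) :=
        Measure.isProbabilityMeasure_map hneg.aemeasurable
      have hPf : Measurable (avgT T ν f) := avg_meas hT hf
      have hBf : Measurable (avgT T (Measure.map (fun g : G => -g) ν) (avgT T ν f)) :=
        avg_meas hT hPf
      have hBfb : ∀ x, |avgT T (Measure.map (fun g : G => -g) ν) (avgT T ν f) x| ≤ C :=
        avg_bdd (avg_bdd hC)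
      rw [Function.iterate_succ_apply,
        B_iter hT hTadd hneg q (C := C) hBf hBfb,
        ← comm_iter hT hTadd q (C := C) (avg_meas hT hf) (avg_bdd hC),
        ← Function.iterate_succ_apply (avgT T ν),
        ← Function.iterate_succ_apply (avgT T (Measure.map (fun g : G => -g) ν))]

lemma N2_iter_le (hT : Measurable fun p : G × X => T p.1 p.2)
    (hMP : ∀ g, MeasurePreserving (T g) μ μ) {κ : Measure G} [IsProbabilityMeasure κ] :
    ∀ (q : ℕ) {C : ℝ} {f : X → ℝ}, Measurable f → (∀ x, |f x| ≤ C) →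
      ∫ x, (avgT T κ)^[q] f x * (avgT T κ)^[q] f x ∂μ ≤ ∫ x, f x * f x ∂μ
  | 0, _, _, _, _ => le_refl _
  | (q+1), C, f, hf, hC => by
      rw [Function.iterate_succ_apply']
      calc ∫ x, avgT T κ ((avgT T κ)^[q] f) x * avgT T κ ((avgT T κ)^[q] f) x ∂μ
          ≤ ∫ x, (avgT T κ)^[q] f x * (avgT T κ)^[q] f x ∂μ :=
            avg_sq_le hT hMP κ (iter_meas hT hf q) (iter_bdd hT hC q)
        _ ≤ ∫ x, f x * f x ∂μ := N2_iter_le hT hMP q (C := C) hf hC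

lemma ip_BP (hT : Measurable fun p : G × X => T p.1 p.2)
    (hMP : ∀ g, MeasurePreserving (T g) μ μ) (hT0 : T 0 = id)
    (hTadd : ∀ g h : G, T (g + h) = T g ∘ T h)
    (hneg : Measurable (fun g : G => -g))
    (ν : Measure G) [IsProbabilityMeasure ν]
    {u w : X → ℝ} {C C' : ℝ} (hu : Measurable u) (hCu : ∀ x, |u x| ≤ C)
    (hw : Measurable w) (hCw : ∀ x, |w x| ≤ C') :
    ∫ x, avgT T (Measure.map (fun g : G => -g) ν) (avgT T ν u) x * w x ∂μ
      = ∫ x, avgT T ν u x * avgT T ν w x ∂μ := by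
  haveI : IsProbabilityMeasure (Measure.map (fun g : G => -g) ν) :=
    Measure.isProbabilityMeasure_map hneg.aemeasurable
  have h := avg_adjoint hT hMP hT0 hTadd hneg (Measure.map (fun g : G => -g) ν)
    (u := avgT T ν u) (avg_meas hT hu) (avg_bdd hCu) hw hCw
  rwa [rev_rev hneg] at h

lemma ip_B_symm (hT : Measurable fun p : G × X => T p.1 p.2)
    (hMP : ∀ g, MeasurePreserving (T g) μ μ) (hT0 : T 0 = id)
    (hTadd : ∀ g h : G, T (g + h) = T g ∘ T h)
    (hneg : Measurable (fun g : G => -g))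
    (ν : Measure G) [IsProbabilityMeasure ν]
    {u w : X → ℝ} {C C' : ℝ} (hu : Measurable u) (hCu : ∀ x, |u x| ≤ C)
    (hw : Measurable w) (hCw : ∀ x, |w x| ≤ C') :
    ∫ x, avgT T (Measure.map (fun g : G => -g) ν) (avgT T ν u) x * w x ∂μ
      = ∫ x, u x * avgT T (Measure.map (fun g : G => -g) ν) (avgT T ν w) x ∂μ := by
  rw [ip_BP hT hMP hT0 hTadd hneg ν hu hCu hw hCw]
  have h2 := ip_BP hT hMP hT0 hTadd hneg ν hw hCw hu hCu
  rw [show ∫ x, u x * avgT T (Measure.map (fun g : G => -g) ν) (avgT T ν w) x ∂μ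
      = ∫ x, avgT T (Measure.map (fun g : G => -g) ν) (avgT T ν w) x * u x ∂μ from
    integral_congr_ae (ae_of_all _ fun x => mul_comm _ _), h2]
  exact integral_congr_ae (ae_of_all _ fun x => mul_comm _ _)

lemma Biter_meas (hT : Measurable fun p : G × X => T p.1 p.2)
    (hneg : Measurable (fun g : G => -g)) {ν : Measure G} [IsProbabilityMeasure ν]
    {w : X → ℝ} (hw : Measurable w) :
    ∀ q, Measurable ((fun v => avgT T (Measure.map (fun g : G => -g) ν) (avgT T ν v))^[q] w)
  | 0 => hw
  | (q+1) => by
      haveI : IsProbabilityMeasure (Measure.map (fun g : G => -g) ν) :=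
        Measure.isProbabilityMeasure_map hneg.aemeasurable
      rw [Function.iterate_succ_apply']
      exact avg_meas hT (avg_meas hT (Biter_meas hT hneg hw q))

lemma Biter_bdd (hT : Measurable fun p : G × X => T p.1 p.2)
    (hneg : Measurable (fun g : G => -g)) {ν : Measure G} [IsProbabilityMeasure ν]
    {w : X → ℝ} {C' : ℝ} (hCw : ∀ x, |w x| ≤ C') :
    ∀ q x, |(fun v => avgT T (Measure.map (fun g : G => -g) ν) (avgT T ν v))^[q] w x| ≤ C'
  | 0 => hCw
  | (q+1) => by
      haveI : IsProbabilityMeasure (Measure.map (fun g : G => -g) ν) :=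
        Measure.isProbabilityMeasure_map hneg.aemeasurable
      rw [Function.iterate_succ_apply']
      exact avg_bdd (avg_bdd (Biter_bdd hT hneg hCw q))

lemma ip_Biter_symm (hT : Measurable fun p : G × X => T p.1 p.2)
    (hMP : ∀ g, MeasurePreserving (T g) μ μ) (hT0 : T 0 = id)
    (hTadd : ∀ g h : G, T (g + h) = T g ∘ T h)
    (hneg : Measurable (fun g : G => -g))
    (ν : Measure G) [IsProbabilityMeasure ν] :
    ∀ (q : ℕ) {u w : X → ℝ} {C C' : ℝ}, Measurable u → (∀ x, |u x| ≤ C) →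
      Measurable w → (∀ x, |w x| ≤ C') →
      ∫ x, (fun v => avgT T (Measure.map (fun g : G => -g) ν) (avgT T ν v))^[q] u x * w x ∂μ
        = ∫ x, u x *
          (fun v => avgT T (Measure.map (fun g : G => -g) ν) (avgT T ν v))^[q] w x ∂μ
  | 0, _, _, _, _, _, _, _, _ => rfl
  | (q+1), u, w, C, C', hu, hCu, hw, hCw => by
      haveI : IsProbabilityMeasure (Measure.map (fun g : G => -g) ν) :=
        Measure.isProbabilityMeasure_map hneg.aemeasurable
      have hBu : Measurable (avgT T (Measure.map (fun g : G => -g) ν) (avgT T ν u)) :=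
        avg_meas hT (avg_meas hT hu)
      have hBub : ∀ x, |avgT T (Measure.map (fun g : G => -g) ν) (avgT T ν u) x| ≤ C :=
        avg_bdd (avg_bdd hCu)
      have hBqw := Biter_meas hT hneg (ν := ν) hw q
      have hBqwb := Biter_bdd hT hneg (ν := ν) hCw q
      rw [Function.iterate_succ_apply,
        ip_Biter_symm hT hMP hT0 hTadd hneg ν q (C := C) (C' := C') hBu hBub hw hCw,
        ip_B_symm hT hMP hT0 hTadd hneg ν hu hCu hBqw hBqwb,
        ← Function.iterate_succ_apply'
          (fun v => avgT T (Measure.map (fun g : G => -g) ν) (avgT T ν v))]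

end Core5

section Core6

variable {G : Type} [MeasurableSpace G] [AddCommGroup G]
variable {X : Type} [MeasurableSpace X]
variable {T : G → X → X} {μ : Measure X} [IsProbabilityMeasure μ]

/-- If the convolution power is nonzero, it is a probability measure and the
averaging operator factors as an iterate. -/
lemma convPow_eq (hT : Measurable fun p : G × X => T p.1 p.2) (hT0 : T 0 = id)
    (hTadd : ∀ g h : G, T (g + h) = T g ∘ T h)
    {ν : Measure G} [IsProbabilityMeasure ν] :
    ∀ m, convPow ν m ≠ 0 → IsProbabilityMeasure (convPow ν m) ∧
      ∀ (C : ℝ) (f : X → ℝ), Measurable f → (∀ x, |f x| ≤ C) →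
        avgT T (convPow ν m) f = (avgT T ν)^[m] f := by
  intro m
  induction m with
  | zero =>
      intro _
      refine ⟨by rw [show convPow ν 0 = Measure.dirac 0 from rfl]; infer_instance,
        fun C f hf _ => ?_⟩
      funext x
      rw [show convPow ν 0 = Measure.dirac 0 from rfl]
      have : avgT T (Measure.dirac 0) f x = f (T 0 x) :=
        integral_dirac' _ 0 ((hf.comp (measT2 hT x)).stronglyMeasurable)
      rw [this, hT0]
      rfl
  | succ m ih =>
      intro hne
      have hrfl : convPow ν (m+1) = conv ν (convPow ν m) := rfl
      have h2 : convPow ν m ≠ 0 := by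
        intro h0
        apply hne
        rw [hrfl, conv, h0, Measure.prod_zero, Measure.map_zero]
      have h1 : AEMeasurable (fun p : G × G => p.1 + p.2) (ν.prod (convPow ν m)) := by
        by_contra hA
        apply hne
        rw [hrfl, conv, Measure.map_of_not_aemeasurable hA]
      obtain ⟨hPm, hform⟩ := ih h2
      haveI := hPm
      have hP : IsProbabilityMeasure (convPow ν (m+1)) := by
        constructor
        rw [hrfl, conv, Measure.map_apply_of_aemeasurable h1 MeasurableSet.univ]
        simp
      refine ⟨hP, fun C f hf hC => ?_⟩
      rw [hrfl, avg_conv hT hTadd h1 hf hC, hform C f hf hC,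
        ← Function.iterate_succ_apply' (avgT T ν)]

/-- The key quantitative bound. -/
lemma key_bound (hT : Measurable fun p : G × X => T p.1 p.2)
    (hMP : ∀ g, MeasurePreserving (T g) μ μ) (hT0 : T 0 = id)
    (hTadd : ∀ g h : G, T (g + h) = T g ∘ T h)
    (hneg : Measurable (fun g : G => -g))
    (ν : Measure G) [IsProbabilityMeasure ν] (n k : ℕ) (hkn : n ≤ 2 ^ k)
    {f : X → ℝ} {C : ℝ} (hf : Measurable f) (hC : ∀ x, |f x| ≤ C) (hC0 : 0 ≤ C)
    (hconv : avgT T (convPow ν n) f = (avgT T ν)^[n] f) :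
    (∫ x, |avgT T ν f x| ∂μ) ^ (4 * 2 ^ k)
      ≤ (C * (∫ x, f x * f x ∂μ) ^ (2 ^ (k+1) - 1))
        * ∫ x, |avgT T (convPow ν n) f x| ∂μ := by
  haveI : IsProbabilityMeasure (Measure.map (fun g : G => -g) ν) :=
    Measure.isProbabilityMeasure_map hneg.aemeasurable
  set B : (X → ℝ) → (X → ℝ) :=
    fun v => avgT T (Measure.map (fun g : G => -g) ν) (avgT T ν v) with hB
  set S : ℝ := ∫ x, f x * f x ∂μ with hS
  set E : ℝ := ∫ x, |avgT T ν f x| ∂μ with hE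
  set F : ℝ := ∫ x, |avgT T (convPow ν n) f x| ∂μ with hF
  set d : ℕ → ℝ := fun m => ∫ x, B^[2 ^ m] f x * B^[2 ^ m] f x ∂μ with hd
  have hS0 : 0 ≤ S := integral_nonneg fun x => mul_self_nonneg _
  have hE0 : 0 ≤ E := integral_nonneg fun x => abs_nonneg _
  have hF0 : 0 ≤ F := integral_nonneg fun x => abs_nonneg _
  have hd0 : ∀ m, 0 ≤ d m := fun m => integral_nonneg fun x => mul_self_nonneg _
  have hPfm : Measurable (avgT T ν f) := avg_meas hT hf
  have hPfb : ∀ x, |avgT T ν f x| ≤ C := fun x => avg_bdd hC x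
  -- squares of bounded measurables are integrable
  have int_sq : ∀ (u : X → ℝ), Measurable u → (∀ x, |u x| ≤ C) →
      Integrable (fun x => u x * u x) μ := by
    intro u hu hCu
    refine int_of_bdd (hu.mul hu).aestronglyMeasurable (C := C * C) (fun x => ?_)
    rw [abs_mul]
    exact mul_le_mul (hCu x) (hCu x) (abs_nonneg _) hC0
  have int_mul : ∀ (u w : X → ℝ), Measurable u → (∀ x, |u x| ≤ C) →
      Measurable w → (∀ x, |w x| ≤ C) → Integrable (fun x => u x * w x) μ := by
    intro u w hu hCu hw hCw
    refine int_of_bdd (hu.mul hw).aestronglyMeasurable (C := C * C) (fun x => ?_)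
    rw [abs_mul]
    exact mul_le_mul (hCu x) (hCw x) (abs_nonneg _) hC0
  have hBm : ∀ q, Measurable (B^[q] f) := Biter_meas hT hneg hf
  have hBb : ∀ q x, |B^[q] f x| ≤ C := Biter_bdd hT hneg hC
  have hB1m : Measurable (B f) := avg_meas hT (avg_meas hT hf)
  have hB1b : ∀ x, |B f x| ≤ C := fun x => avg_bdd (avg_bdd hC) x
  -- step 1 : E ^ 2 ≤ ∫ (P f)²
  have step1 : E ^ 2 ≤ ∫ x, avgT T ν f x * avgT T ν f x ∂μ := by
    have habs : ∀ x : X, |avgT T ν f x| * |avgT T ν f x| = avgT T ν f x * avgT T ν f x :=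
      fun x => abs_mul_abs_self _
    have h4 : Integrable (fun x : X => |avgT T ν f x| * |avgT T ν f x|) μ := by
      have := int_sq _ hPfm hPfb
      refine this.congr (ae_of_all _ fun x => (habs x).symm) |>.congr ?_
      exact ae_of_all _ fun x => rfl
    have h3 : Integrable (fun x : X => |avgT T ν f x| * 1) μ := by
      simp only [mul_one]
      exact int_of_bdd hPfm.abs.aestronglyMeasurable (C := C)
        (fun x => by simpa [abs_abs] using hPfb x)
    have hcs := cs_integral (m := μ) (u := fun x => |avgT T ν f x|) (w := fun _ => 1)
      h4 (by simp) h3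
    simp only [mul_one, integral_const, measure_univ, ENNReal.toReal_one, probReal_univ, smul_eq_mul,
      one_mul] at hcs
    rw [integral_congr_ae (ae_of_all _ habs)] at hcs
    exact hcs
  -- step 2
  have step2 : ∫ x, avgT T ν f x * avgT T ν f x ∂μ = ∫ x, B f x * f x ∂μ :=
    (ip_BP hT hMP hT0 hTadd hneg ν hf hC hf hC).symm
  -- step 3
  have hd0eq : d 0 = ∫ x, B f x * B f x ∂μ := by
    simp only [hd, pow_zero, Function.iterate_one]
  have step3 : (∫ x, B f x * f x ∂μ) ^ 2 ≤ d 0 * S := by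
    rw [hd0eq, hS]
    exact cs_integral (int_sq _ hB1m hB1b) (int_sq _ hf hC) (int_mul _ _ hB1m hB1b hf hC)
  -- step 4
  have step4 : ∀ m, d m ^ 2 ≤ d (m + 1) * S := by
    intro m
    have hiter : B^[2 ^ (m + 1)] f = B^[2 ^ m] (B^[2 ^ m] f) := by
      rw [show 2 ^ (m + 1) = 2 ^ m + 2 ^ m by rw [pow_succ]; ring,
        Function.iterate_add_apply]
    have hsym := ip_Biter_symm hT hMP hT0 hTadd hneg ν (2 ^ m) (C := C) (C' := C)
      (hBm (2 ^ m)) (hBb (2 ^ m)) hf hC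
    rw [← hB] at hsym
    have e1 : d m = ∫ x, B^[2 ^ (m + 1)] f x * f x ∂μ := by
      rw [hiter, hsym]
    have hcs := cs_integral (m := μ) (u := B^[2 ^ (m + 1)] f) (w := f)
      (int_sq _ (hBm _) (hBb _)) (int_sq _ hf hC) (int_mul _ _ (hBm _) (hBb _) hf hC)
    rw [e1]
    exact hcs
  -- step 5
  have step5 : ∀ k', d 0 ^ 2 ^ k' ≤ d k' * S ^ (2 ^ k' - 1) := by
    intro k'
    induction k' with
    | zero => simpa using le_refl (d 0)
    | succ k' ih =>
        have h1 : d 0 ^ 2 ^ (k' + 1) = (d 0 ^ 2 ^ k') ^ 2 := by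
          rw [← pow_mul, pow_succ]
        have h2 : (2 ^ k' - 1) * 2 + 1 = 2 ^ (k' + 1) - 1 := by
          have h3 := Nat.one_le_two_pow (n := k')
          have h4 : 2 ^ (k' + 1) = 2 ^ k' * 2 := by rw [pow_succ]
          omega
        rw [h1]
        calc (d 0 ^ 2 ^ k') ^ 2 ≤ (d k' * S ^ (2 ^ k' - 1)) ^ 2 :=
              pow_le_pow_left₀ (pow_nonneg (hd0 0) _) ih 2
          _ = d k' ^ 2 * S ^ ((2 ^ k' - 1) * 2) := by rw [mul_pow, ← pow_mul]
          _ ≤ (d (k' + 1) * S) * S ^ ((2 ^ k' - 1) * 2) :=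
              mul_le_mul_of_nonneg_right (step4 k') (pow_nonneg hS0 _)
          _ = d (k' + 1) * S ^ ((2 ^ k' - 1) * 2 + 1) := by
              rw [mul_assoc, ← pow_succ']
          _ = d (k' + 1) * S ^ (2 ^ (k' + 1) - 1) := by rw [h2]
  -- step 6
  have step6 : d k ≤ C * F := by
    have e1 : B^[2 ^ k] f
        = (avgT T (Measure.map (fun g : G => -g) ν))^[2 ^ k] ((avgT T ν)^[2 ^ k] f) :=
      B_iter hT hTadd hneg (2 ^ k) hf hC
    have h2 : d k ≤ ∫ x, (avgT T ν)^[2 ^ k] f x * (avgT T ν)^[2 ^ k] f x ∂μ := by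
      have := N2_iter_le hT hMP (κ := Measure.map (fun g : G => -g) ν) (2 ^ k)
        (C := C) (iter_meas (κ := ν) hT hf (2 ^ k)) (iter_bdd (κ := ν) hT hC (2 ^ k))
      calc d k = ∫ x, B^[2 ^ k] f x * B^[2 ^ k] f x ∂μ := rfl
        _ = ∫ x, (avgT T (Measure.map (fun g : G => -g) ν))^[2 ^ k]
              ((avgT T ν)^[2 ^ k] f) x
            * (avgT T (Measure.map (fun g : G => -g) ν))^[2 ^ k]
              ((avgT T ν)^[2 ^ k] f) x ∂μ := by rw [e1]
        _ ≤ _ := this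
    have h3 : ∫ x, (avgT T ν)^[2 ^ k] f x * (avgT T ν)^[2 ^ k] f x ∂μ
        ≤ ∫ x, (avgT T ν)^[n] f x * (avgT T ν)^[n] f x ∂μ := by
      have e2 : (avgT T ν)^[2 ^ k] f = (avgT T ν)^[2 ^ k - n] ((avgT T ν)^[n] f) := by
        rw [← Function.iterate_add_apply, Nat.sub_add_cancel hkn]
      rw [e2]
      exact N2_iter_le hT hMP (2 ^ k - n) (C := C) (iter_meas hT hf n) (iter_bdd hT hC n)
    have h4 : ∫ x, (avgT T ν)^[n] f x * (avgT T ν)^[n] f x ∂μ ≤ C * F := by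
      rw [← hconv, hF]
      have hb : ∀ x, |avgT T (convPow ν n) f x| ≤ C := by
        rw [hconv]; exact iter_bdd hT hC n
      have hm : Measurable (avgT T (convPow ν n) f) := by
        rw [hconv]; exact iter_meas hT hf n
      have hmono : ∀ x, avgT T (convPow ν n) f x * avgT T (convPow ν n) f x
          ≤ C * |avgT T (convPow ν n) f x| := by
        intro x
        calc avgT T (convPow ν n) f x * avgT T (convPow ν n) f x
            = |avgT T (convPow ν n) f x| * |avgT T (convPow ν n) f x| :=
              (abs_mul_abs_self _).symm
          _ ≤ C * |avgT T (convPow ν n) f x| :=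
              mul_le_mul_of_nonneg_right (hb x) (abs_nonneg _)
      have hil : Integrable
          (fun x => avgT T (convPow ν n) f x * avgT T (convPow ν n) f x) μ := by
        rw [hconv]
        exact int_sq _ (iter_meas hT hf n) (iter_bdd hT hC n)
      have hir : Integrable (fun x => C * |avgT T (convPow ν n) f x|) μ := by
        refine Integrable.const_mul ?_ C
        exact int_of_bdd hm.abs.aestronglyMeasurable (C := C)
          (fun x => by simpa [abs_abs] using hb x)
      calc ∫ x, avgT T (convPow ν n) f x * avgT T (convPow ν n) f x ∂μ
          ≤ ∫ x, C * |avgT T (convPow ν n) f x| ∂μ := integral_mono hil hir hmono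
        _ = C * ∫ x, |avgT T (convPow ν n) f x| ∂μ := integral_const_mul C _
    exact h2.trans (h3.trans h4)
  -- assemble
  have hE4 : E ^ 4 ≤ d 0 * S := by
    have h1 : E ^ 2 ≤ ∫ x, B f x * f x ∂μ := step1.trans_eq step2
    have h2 : (E ^ 2) ^ 2 ≤ (∫ x, B f x * f x ∂μ) ^ 2 :=
      pow_le_pow_left₀ (pow_nonneg hE0 2) h1 2
    calc E ^ 4 = (E ^ 2) ^ 2 := by ring
      _ ≤ (∫ x, B f x * f x ∂μ) ^ 2 := h2
      _ ≤ d 0 * S := step3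
  have hexp : 2 ^ k - 1 + 2 ^ k = 2 ^ (k + 1) - 1 := by
    have h3 := Nat.one_le_two_pow (n := k)
    have h4 : 2 ^ (k + 1) = 2 ^ k * 2 := by rw [pow_succ]
    omega
  calc E ^ (4 * 2 ^ k) = (E ^ 4) ^ 2 ^ k := by rw [← pow_mul]
    _ ≤ (d 0 * S) ^ 2 ^ k := pow_le_pow_left₀ (pow_nonneg hE0 4) hE4 _
    _ = d 0 ^ 2 ^ k * S ^ 2 ^ k := mul_pow _ _ _
    _ ≤ (d k * S ^ (2 ^ k - 1)) * S ^ 2 ^ k :=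
        mul_le_mul_of_nonneg_right (step5 k) (pow_nonneg hS0 _)
    _ = d k * S ^ (2 ^ k - 1 + 2 ^ k) := by rw [mul_assoc, ← pow_add]
    _ ≤ (C * F) * S ^ (2 ^ k - 1 + 2 ^ k) :=
        mul_le_mul_of_nonneg_right step6 (pow_nonneg hS0 _)
    _ = (C * S ^ (2 ^ (k + 1) - 1)) * F := by rw [hexp]; ring

end Core6

section Core7

variable {G : Type} [MeasurableSpace G] [AddCommGroup G]
variable {X : Type} [MeasurableSpace X]
variable {T : G → X → X} {μ : Measure X} [IsProbabilityMeasure μ]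

/-- Bounded-measurable case of the main theorem. -/
lemma bounded_tendsto (hT : Measurable fun p : G × X => T p.1 p.2)
    (hMP : ∀ g, MeasurePreserving (T g) μ μ) (hT0 : T 0 = id)
    (hTadd : ∀ g h : G, T (g + h) = T g ∘ T h)
    (hneg : Measurable (fun g : G => -g))
    (ν : ℕ → Measure G) (hprob : ∀ j, IsProbabilityMeasure (ν j)) (n : ℕ)
    (hgood : ∀ᶠ j in atTop, convPow (ν j) n ≠ 0)
    (hF : ∀ f₀ : X → ℝ, Integrable f₀ μ →
      Tendsto (fun j => ∫ x, |avgT T (convPow (ν j) n) f₀ x - ∫ y, f₀ y ∂μ| ∂μ)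
        atTop (𝓝 0))
    {f : X → ℝ} {C : ℝ} (hf : Measurable f) (hC : ∀ x, |f x| ≤ C) :
    Tendsto (fun j => ∫ x, |avgT T (ν j) f x - ∫ y, f y ∂μ| ∂μ) atTop (𝓝 0) := by
  set C' : ℝ := max C 0 with hC'def
  have hC' : ∀ x, |f x| ≤ C' := fun x => (hC x).trans (le_max_left _ _)
  set c : ℝ := ∫ y, f y ∂μ with hc
  set f₀ : X → ℝ := fun y => f y - c with hf₀
  have hf₀m : Measurable f₀ := hf.sub measurable_const
  set C₀ : ℝ := C' + |c| with hC₀def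
  have hC₀ : ∀ x, |f₀ x| ≤ C₀ := fun x =>
    (abs_sub _ _).trans (add_le_add_left (hC' x) _)
  have hC₀0 : 0 ≤ C₀ := add_nonneg (le_max_right _ _) (abs_nonneg _)
  have hf₀int : Integrable f₀ μ := int_of_bdd hf₀m.aestronglyMeasurable hC₀
  have h0 : ∫ y, f₀ y ∂μ = 0 := by
    rw [hf₀]
    rw [integral_sub (int_of_bdd hf.aestronglyMeasurable hC') (integrable_const c)]
    simp [hc]
  have key : ∀ j x, avgT T (ν j) f₀ x = avgT T (ν j) f x - c := by
    intro j x
    haveI := hprob j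
    show ∫ g, (f (T g x) - c) ∂ν j = (∫ g, f (T g x) ∂ν j) - c
    rw [integral_sub (int_comp hT hf hC' x) (integrable_const c)]
    simp
  have hF₀ := hF f₀ hf₀int
  rw [h0] at hF₀
  simp only [sub_zero] at hF₀
  -- constants
  set S : ℝ := ∫ x, f₀ x * f₀ x ∂μ with hS
  have hS0 : 0 ≤ S := integral_nonneg fun x => mul_self_nonneg _
  set M : ℕ := 4 * 2 ^ n with hM
  set K : ℝ := C₀ * S ^ (2 ^ (n + 1) - 1) with hK
  have hK0 : 0 ≤ K := mul_nonneg hC₀0 (pow_nonneg hS0 _)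
  refine Metric.tendsto_atTop.mpr fun ε hε => ?_
  have hεM : 0 < ε ^ M := pow_pos hε M
  have hδ : 0 < ε ^ M / (K + 1) := by positivity
  obtain ⟨N₁, hN₁⟩ := Metric.tendsto_atTop.mp hF₀ (ε ^ M / (K + 1)) hδ
  obtain ⟨N₂, hN₂⟩ := eventually_atTop.mp hgood
  refine ⟨max N₁ N₂, fun j hj => ?_⟩
  haveI := hprob j
  have hne := hN₂ j (le_trans (le_max_right _ _) hj)
  obtain ⟨hPconv, hform⟩ := convPow_eq (T := T) (X := X) hT hT0 hTadd n hne
  have hconv := hform C₀ f₀ hf₀m hC₀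
  have hkey := key_bound hT hMP hT0 hTadd hneg (ν j) n n (Nat.lt_two_pow_self (n := n)).le
    hf₀m hC₀ hC₀0 hconv
  set E : ℝ := ∫ x, |avgT T (ν j) f₀ x| ∂μ with hE
  set F : ℝ := ∫ x, |avgT T (convPow (ν j) n) f₀ x| ∂μ with hFdef
  have hE0 : 0 ≤ E := integral_nonneg fun x => abs_nonneg _
  have hF0 : 0 ≤ F := integral_nonneg fun x => abs_nonneg _
  have hFj : F < ε ^ M / (K + 1) := by
    have := hN₁ j (le_trans (le_max_left _ _) hj)
    rwa [Real.dist_eq, sub_zero, abs_of_nonneg hF0] at this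
  have hEM : E ^ M < ε ^ M := by
    calc E ^ M ≤ K * F := by
          rw [hM, hK]
          exact hkey
      _ ≤ (K + 1) * F := mul_le_mul_of_nonneg_right (by linarith) hF0
      _ < (K + 1) * (ε ^ M / (K + 1)) :=
          mul_lt_mul_of_pos_left hFj (by linarith)
      _ = ε ^ M := by field_simp
  have hEε : E < ε := lt_of_pow_lt_pow_left₀ M hε.le hEM
  have hgoal : ∫ x, |avgT T (ν j) f x - c| ∂μ = E := by
    rw [hE]
    exact integral_congr_ae (ae_of_all _ fun x => congrArg abs (key j x).symm)
  rw [Real.dist_eq, sub_zero, hgoal, abs_of_nonneg hE0]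
  exact hEε

end Core7

/-- A sequence of probability measures on `G` is universal if for every ergodic
measure-preserving action of `G` on a probability space and every integrable `f`,
the weighted averages converge in `L¹` to `∫ f dμ`. -/
def IsUniversalSeq {G : Type} [AddCommGroup G] [MeasurableSpace G]
    (ν : ℕ → Measure G) : Prop :=
  ∀ (X : Type) (_ : MeasurableSpace X) (μ : Measure X), IsProbabilityMeasure μ →
    ∀ T : G → X → X, (Measurable fun p : G × X => T p.1 p.2) →
      (∀ g, MeasurePreserving (T g) μ μ) → T 0 = id →
      (∀ g h : G, T (g + h) = T g ∘ T h) →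
      (∀ φ : X → ℝ, Measurable φ →
        (∀ g, (fun x => φ (T g x)) =ᵐ[μ] φ) → ∃ c, φ =ᵐ[μ] fun _ => c) →
      ∀ f : X → ℝ, Integrable f μ →
        Tendsto (fun j => ∫ x, |(∫ g, f (T g x) ∂(ν j)) - ∫ y, f y ∂μ| ∂μ)
          atTop (𝓝 0)

theorem stmt4 {G : Type} [AddCommGroup G] [TopologicalSpace G] [IsTopologicalAddGroup G]
    [LocallyCompactSpace G] [MeasurableSpace G] [BorelSpace G]
    (ν : ℕ → Measure G) (hprob : ∀ j, IsProbabilityMeasure (ν j))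
    (n : ℕ) (hn : 1 ≤ n)
    (h : IsUniversalSeq (fun j => convPow (ν j) n)) :
    IsUniversalSeq ν := by
  intro X mX μ hμ T hT hMP hT0 hTadd herg f hf
  haveI := hμ
  have hneg : Measurable fun g : G => -g := continuous_neg.measurable
  -- eventual non-degeneracy of the convolution powers
  have hgood : ∀ᶠ j in atTop, convPow (ν j) n ≠ 0 := by
    have htr := h Unit inferInstance (Measure.dirac ()) inferInstance
      (fun _ => id) measurable_snd (fun _ => MeasurePreserving.id _) rfl
      (fun _ _ => rfl)
      (fun φ _ _ => ⟨φ (), ae_of_all _ fun x => by cases x; rfl⟩)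
      (fun _ => (1 : ℝ)) (integrable_const 1)
    simp only [integral_const, measure_univ, ENNReal.toReal_one, probReal_univ, smul_eq_mul,
      one_mul, mul_one] at htr
    obtain ⟨N, hN⟩ := Metric.tendsto_atTop.mp htr 1 one_pos
    refine eventually_atTop.mpr ⟨N, fun j hj hzero => ?_⟩
    have h1 := hN j hj
    rw [hzero] at h1
    simp [Real.dist_eq] at h1
  have hF : ∀ f₀ : X → ℝ, Integrable f₀ μ →
      Tendsto (fun j => ∫ x, |avgT T (convPow (ν j) n) f₀ x - ∫ y, f₀ y ∂μ| ∂μ)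
        atTop (𝓝 0) :=
    fun f₀ hf₀ => h X mX μ hμ T hT hMP hT0 hTadd herg f₀ hf₀
  -- The predicate, proved by `Integrable.induction`.
  have main : ∀ ⦃f : X → ℝ⦄, Integrable f μ →
      Tendsto (fun j => ∫ x, |avgT T (ν j) f x - ∫ y, f y ∂μ| ∂μ) atTop (𝓝 0) := by
    refine Integrable.induction
      (fun f : X → ℝ => Tendsto (fun j => ∫ x, |avgT T (ν j) f x - ∫ y, f y ∂μ| ∂μ)
        atTop (𝓝 0)) ?_ ?_ ?_ ?_
    · -- indicators
      intro c₀ s hs _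
      exact bounded_tendsto hT hMP hT0 hTadd hneg ν hprob n hgood hF
        (C := |c₀|) (measurable_const.indicator hs)
        (fun x => by
          by_cases hx : x ∈ s
          · simp [Set.indicator_of_mem hx]
          · simp [Set.indicator_of_notMem hx, abs_nonneg])
    · -- addition
      intro p q _ hp hq hP hQ
      have hsum := hP.add hQ
      rw [add_zero] at hsum
      refine squeeze_zero (fun j => integral_nonneg fun x => abs_nonneg _)
        (fun j => ?_) hsum
      haveI := hprob j
      have hpq : Integrable (p + q) μ := hp.add hq
      have hcsum : ∫ y, (p + q) y ∂μ = (∫ y, p y ∂μ) + ∫ y, q y ∂μ := by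
        simpa using integral_add hp hq
      have hae := avg_add_ae hT hMP (ν j) hp hq
      have e1 : ∫ x, |avgT T (ν j) (p + q) x - ∫ y, (p + q) y ∂μ| ∂μ
          ≤ ∫ x, (|avgT T (ν j) p x - ∫ y, p y ∂μ|
              + |avgT T (ν j) q x - ∫ y, q y ∂μ|) ∂μ := by
        refine integral_mono_ae
          (((avg_integrable hT hMP (ν j) hpq).sub (integrable_const _)).abs)
          ((((avg_integrable hT hMP (ν j) hp).sub (integrable_const _)).abs).add
            ((((avg_integrable hT hMP (ν j) hq).sub (integrable_const _))).abs))
          ?_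
        filter_upwards [hae] with x hx
        have : avgT T (ν j) (p + q) x = avgT T (ν j) p x + avgT T (ν j) q x := hx
        rw [this, hcsum]
        calc |avgT T (ν j) p x + avgT T (ν j) q x - ((∫ y, p y ∂μ) + ∫ y, q y ∂μ)|
            = |(avgT T (ν j) p x - ∫ y, p y ∂μ) + (avgT T (ν j) q x - ∫ y, q y ∂μ)| := by
              ring_nf
          _ ≤ |avgT T (ν j) p x - ∫ y, p y ∂μ| + |avgT T (ν j) q x - ∫ y, q y ∂μ| :=
              abs_add_le _ _
      refine e1.trans_eq ?_
      exact integral_add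
        (((avg_integrable hT hMP (ν j) hp).sub (integrable_const _)).abs)
        (((avg_integrable hT hMP (ν j) hq).sub (integrable_const _)).abs)
    · -- closedness in L¹
      refine IsSeqClosed.isClosed fun φs ψ hmem hlim => ?_
      refine Metric.tendsto_atTop.mpr fun ε hε => ?_
      obtain ⟨m, hm⟩ : ∃ m, dist (φs m) ψ < ε / 3 := by
        obtain ⟨N, hN⟩ := Metric.tendsto_atTop.mp hlim (ε / 3) (by positivity)
        exact ⟨N, hN N le_rfl⟩
      have hδeq : dist (φs m) ψ = ∫ x, |(φs m : X → ℝ) x - (ψ : X → ℝ) x| ∂μ := by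
        rw [L1.dist_eq_integral_dist]
        exact integral_congr_ae (ae_of_all _ fun x => Real.dist_eq _ _)
      set δ : ℝ := ∫ x, |(φs m : X → ℝ) x - (ψ : X → ℝ) x| ∂μ with hδdef
      have hδ : δ < ε / 3 := hδeq ▸ hm
      obtain ⟨N, hN⟩ := Metric.tendsto_atTop.mp (hmem m) (ε / 3) (by positivity)
      refine ⟨N, fun j hj => ?_⟩
      haveI := hprob j
      have hψ : Integrable (ψ : X → ℝ) μ := L1.integrable_coeFn ψ
      have hφ : Integrable ((φs m : X →₁[μ] ℝ) : X → ℝ) μ := L1.integrable_coeFn _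
      have hdiff : Integrable (fun y => (ψ : X → ℝ) y - (φs m : X → ℝ) y) μ :=
        hψ.sub hφ
      -- decompose ψ = φ + (ψ - φ)
      have hψeq : (ψ : X → ℝ) = fun y => (φs m : X → ℝ) y
          + ((ψ : X → ℝ) y - (φs m : X → ℝ) y) := by
        funext y; ring
      have hsplit : avgT T (ν j) (ψ : X → ℝ) =ᵐ[μ] fun x =>
          avgT T (ν j) ((φs m : X → ℝ)) x
          + avgT T (ν j) (fun y => (ψ : X → ℝ) y - (φs m : X → ℝ) y) x := by
        nth_rewrite 1 [hψeq]
        exact avg_add_ae hT hMP (ν j) hφ hdiff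
      have hcψ : ∫ y, (ψ : X → ℝ) y ∂μ
          = (∫ y, (φs m : X → ℝ) y ∂μ)
            + ∫ y, ((ψ : X → ℝ) y - (φs m : X → ℝ) y) ∂μ := by
        nth_rewrite 1 [hψeq]
        exact integral_add hφ hdiff
      have hδ2 : |∫ y, ((ψ : X → ℝ) y - (φs m : X → ℝ) y) ∂μ| ≤ δ := by
        rw [hδdef]
        have := norm_integral_le_integral_norm
          (f := fun y => (ψ : X → ℝ) y - (φs m : X → ℝ) y) (μ := μ)
        simp only [Real.norm_eq_abs] at this
        refine this.trans_eq ?_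
        exact integral_congr_ae (ae_of_all _ fun x => abs_sub_comm _ _)
      have hδ3 : ∫ x, |avgT T (ν j)
          (fun y => (ψ : X → ℝ) y - (φs m : X → ℝ) y) x| ∂μ ≤ δ := by
        rw [hδdef]
        refine (avg_abs_le hT hMP (ν j) hdiff).trans_eq ?_
        exact integral_congr_ae (ae_of_all _ fun x => abs_sub_comm _ _)
      -- E(ψ) ≤ E(φ) + 2δ
      have hEψ : ∫ x, |avgT T (ν j) (ψ : X → ℝ) x - ∫ y, (ψ : X → ℝ) y ∂μ| ∂μ
          ≤ (∫ x, |avgT T (ν j) ((φs m : X → ℝ)) x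
              - ∫ y, (φs m : X → ℝ) y ∂μ| ∂μ) + 2 * δ := by
        have step : ∫ x, |avgT T (ν j) (ψ : X → ℝ) x - ∫ y, (ψ : X → ℝ) y ∂μ| ∂μ
            ≤ ∫ x, (|avgT T (ν j) ((φs m : X → ℝ)) x - ∫ y, (φs m : X → ℝ) y ∂μ|
                + (|avgT T (ν j) (fun y => (ψ : X → ℝ) y - (φs m : X → ℝ) y) x|
                  + |∫ y, ((ψ : X → ℝ) y - (φs m : X → ℝ) y) ∂μ|)) ∂μ := by
          have i1 : Integrable (fun x => |avgT T (ν j) ((φs m : X → ℝ)) x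
              - ∫ y, (φs m : X → ℝ) y ∂μ|) μ :=
            ((avg_integrable hT hMP (ν j) hφ).sub (integrable_const _)).abs
          have i2 : Integrable (fun x => |avgT T (ν j)
              (fun y => (ψ : X → ℝ) y - (φs m : X → ℝ) y) x|) μ :=
            (avg_integrable hT hMP (ν j) hdiff).abs
          have i3 : Integrable (fun x => |avgT T (ν j) (ψ : X → ℝ) x
              - ∫ y, (ψ : X → ℝ) y ∂μ|) μ :=
            ((avg_integrable hT hMP (ν j) hψ).sub (integrable_const _)).abs
          refine integral_mono_ae i3 (i1.add (i2.add (integrable_const _))) ?_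
          filter_upwards [hsplit] with x hx
          rw [hx, hcψ]
          calc |avgT T (ν j) ((φs m : X → ℝ)) x
                + avgT T (ν j) (fun y => (ψ : X → ℝ) y - (φs m : X → ℝ) y) x
                - ((∫ y, (φs m : X → ℝ) y ∂μ)
                  + ∫ y, ((ψ : X → ℝ) y - (φs m : X → ℝ) y) ∂μ)|
              = |(avgT T (ν j) ((φs m : X → ℝ)) x - ∫ y, (φs m : X → ℝ) y ∂μ)
                + (avgT T (ν j) (fun y => (ψ : X → ℝ) y - (φs m : X → ℝ) y) x
                  - ∫ y, ((ψ : X → ℝ) y - (φs m : X → ℝ) y) ∂μ)| := by ring_nf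
            _ ≤ |avgT T (ν j) ((φs m : X → ℝ)) x - ∫ y, (φs m : X → ℝ) y ∂μ|
                + |avgT T (ν j) (fun y => (ψ : X → ℝ) y - (φs m : X → ℝ) y) x
                  - ∫ y, ((ψ : X → ℝ) y - (φs m : X → ℝ) y) ∂μ| := abs_add_le _ _
            _ ≤ |avgT T (ν j) ((φs m : X → ℝ)) x - ∫ y, (φs m : X → ℝ) y ∂μ|
                + (|avgT T (ν j) (fun y => (ψ : X → ℝ) y - (φs m : X → ℝ) y) x|
                  + |∫ y, ((ψ : X → ℝ) y - (φs m : X → ℝ) y) ∂μ|) := by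
                  gcongr
                  exact abs_sub _ _
        refine step.trans ?_
        have i1 : Integrable (fun x => |avgT T (ν j) ((φs m : X → ℝ)) x
            - ∫ y, (φs m : X → ℝ) y ∂μ|) μ :=
          ((avg_integrable hT hMP (ν j) hφ).sub (integrable_const _)).abs
        have i2 : Integrable (fun x => |avgT T (ν j)
            (fun y => (ψ : X → ℝ) y - (φs m : X → ℝ) y) x|) μ :=
          (avg_integrable hT hMP (ν j) hdiff).abs
        have i23 : Integrable (fun x => |avgT T (ν j)
            (fun y => (ψ : X → ℝ) y - (φs m : X → ℝ) y) x|
            + |∫ y, ((ψ : X → ℝ) y - (φs m : X → ℝ) y) ∂μ|) μ :=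
          i2.add (integrable_const _)
        rw [integral_add i1 i23, integral_add i2 (integrable_const _), integral_const]
        have : μ.real Set.univ
            • |∫ y, ((ψ : X → ℝ) y - (φs m : X → ℝ) y) ∂μ| ≤ δ := by
          simpa [measure_univ] using hδ2
        linarith [hδ3, this]
      have hEφ : dist (∫ x, |avgT T (ν j) ((φs m : X → ℝ)) x
          - ∫ y, (φs m : X → ℝ) y ∂μ| ∂μ) 0 < ε / 3 := hN j hj
      rw [Real.dist_eq, sub_zero,
        abs_of_nonneg (integral_nonneg fun x => abs_nonneg _)] at hEφ
      rw [Real.dist_eq, sub_zero,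
        abs_of_nonneg (integral_nonneg fun x => abs_nonneg _)]
      have hδ0 : 0 ≤ δ := integral_nonneg fun x => abs_nonneg _
      linarith
    · -- ae congruence
      intro p q hpq hip hP
      have hc : ∫ y, q y ∂μ = ∫ y, p y ∂μ := integral_congr_ae hpq.symm
      have heq : ∀ j, ∫ x, |avgT T (ν j) q x - ∫ y, q y ∂μ| ∂μ
          = ∫ x, |avgT T (ν j) p x - ∫ y, p y ∂μ| ∂μ := by
        intro j
        haveI := hprob j
        rw [hc]
        refine integral_congr_ae ?_
        filter_upwards [avg_congr_ae hT hMP (ν j) hpq.symm] with x hx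
        rw [hx]
      rw [show (fun j => ∫ x, |avgT T (ν j) q x - ∫ y, q y ∂μ| ∂μ)
          = fun j => ∫ x, |avgT T (ν j) p x - ∫ y, p y ∂μ| ∂μ from funext heq]
      exact hP
  show Tendsto (fun j => ∫ x, |avgT T (ν j) f x - ∫ y, f y ∂μ| ∂μ) atTop (𝓝 0)
  exact main hf
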